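/- There is a constant c (depending on the formal theory T and the universal machine) such that T cannot prove any true statement of the form 'K(x) > n' for n greater than the complexity of T plus c, provided T proves only true statements of this form. -/

import Mathlib

/-- Programs and outputs are finite bit strings. -/
abbrev Str := List Bool

/-- A computer is a partial computable function from bit strings to bit strings.
A universal computer can simulate any partial computable function via a fixed prefix. -/
def Univ (U : Str →. Str) : Prop :=
  Partrec U ∧ ∀ F : Str →. Str, Partrec F → ∃ e : Str, ∀ p : Str, U (e ++ p) = F p

/-- A program `p` is elegant (for `U`) if it halts and no strictly shorter program
produces the same output. -/
def Elegant (U : Str →. Str) (p : Str) : Prop :=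
  ∃ x : Str, x ∈ U p ∧ ∀ q : Str, q.length < p.length → x ∉ U q

/-- Kolmogorov complexity of `x` relative to `U`: the length of a shortest program for `x`. -/
noncomputable def Kc (U : Str →. Str) (x : Str) : ℕ :=
  sInf { n : ℕ | ∃ p : Str, p.length = n ∧ x ∈ U p }

/-- The domain of `U` is prefix-free. -/
def PrefixFreeDom (U : Str →. Str) : Prop :=
  ∀ p q : Str, (U p).Dom → (U q).Dom → p <+: q → p = q

/-- A universal prefix-free machine. -/
def UnivPF (U : Str →. Str) : Prop :=
  Partrec U ∧ PrefixFreeDom U ∧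
    ∀ F : Str →. Str, Partrec F → PrefixFreeDom F →
      ∃ e : Str, ∀ p : Str, U (e ++ p) = F p

open Classical in
/-- The halting probability `Ω = Σ_{U(p)↓} 2^(-|p|)`. -/
noncomputable def Omega (U : Str →. Str) : ℝ :=
  ∑' p : Str, if (U p).Dom then ((1 : ℝ) / 2) ^ p.length else 0

/-- The `n`-th bit (0-indexed) of the binary expansion of a real `α`. -/
noncomputable def nthBit (α : ℝ) (n : ℕ) : Bool :=
  decide (⌊α * 2 ^ (n + 1)⌋ % 2 = 1)

/-- The string of the first `n` binary digits of `α`. -/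
noncomputable def bitsOf (α : ℝ) (n : ℕ) : Str :=
  (List.range n).map (nthBit α)

/-- An injective encoding of a pair (string, number) as a bit string,
used to express the sentence `K(x) > n`. -/
def encPair (x : Str) (n : ℕ) : Str :=
  (x.flatMap fun b => [b, b]) ++ [true, false] ++ List.replicate n true

/-- An injective encoding of the sentence `the i-th bit of Ω is b`. -/
def encBit (i : ℕ) (b : Bool) : Str :=
  List.replicate i true ++ [false, b]

/-- A set of pairs is computably enumerable. -/
def CE (S : Set (Str × ℕ)) : Prop :=
  ∃ f : ℕ → Option (Str × ℕ), Computable f ∧ S = { a | ∃ k, f k = some a }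

/-- A set of strings is computably enumerable. -/
def CEStr (S : Set Str) : Prop :=
  ∃ f : ℕ → Option Str, Computable f ∧ S = { a | ∃ k, f k = some a }

/-! ### Auxiliary machinery for the proof of stmt5 -/

/-- Parse a string of the form `1^m 0 t` into `(m, t)`. -/
def splitStr : Str → ℕ × Str
  | [] => (0, [])
  | b :: r => if b then ((splitStr r).1 + 1, (splitStr r).2) else (0, r)

lemma splitStr_eq (m : ℕ) (t : Str) :
    splitStr (List.replicate m true ++ false :: t) = (m, t) := by
  induction m with
  | zero => simp [splitStr]
  | succ m ih => simp [List.replicate_succ, splitStr, ih]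

lemma splitStr_primrec : Primrec splitStr := by
  have H := Primrec.list_rec (α := Str) (β := Bool) (σ := ℕ × Str) .id
    (.const ((0 : ℕ), ([] : Str)))
    (h := fun _ z => bif z.1 then (z.2.2.1 + 1, z.2.2.2) else ((0 : ℕ), z.2.1))
    (Primrec.cond (Primrec.fst.comp .snd)
      (Primrec.pair
        (Primrec.succ.comp <| Primrec.fst.comp <| Primrec.snd.comp <| Primrec.snd.comp .snd)
        (Primrec.snd.comp <| Primrec.snd.comp <| Primrec.snd.comp .snd))
      (Primrec.pair (.const 0) (Primrec.fst.comp <| Primrec.snd.comp .snd)) |>.to₂)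
  refine H.of_eq fun s => ?_
  induction s with
  | nil => rfl
  | cons b r ih => cases b <;> simp [splitStr, ← ih]

lemma encPair_primrec : Primrec₂ encPair := by
  have hdbl : Primrec fun x : Str => x.flatMap fun b => [b, b] := by
    refine Primrec.list_flatMap .id ?_
    exact (Primrec.list_cons.comp .snd
      (Primrec.list_cons.comp .snd (.const []))).to₂
  have hrep : Primrec fun n : ℕ => List.replicate n true := by
    have : Primrec fun n : ℕ => (List.range n).map fun _ => true :=
      Primrec.list_map Primrec.list_range ((Primrec.const true).to₂)
    refine this.of_eq fun n => ?_
    rw [show (fun _ : ℕ => true) = Function.const ℕ true from rfl, List.map_const,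
      List.length_range]
  have : Primrec fun a : Str × ℕ =>
      ((a.1.flatMap fun b => [b, b]) ++ [true, false]) ++ List.replicate a.2 true :=
    Primrec.list_append.comp
      (Primrec.list_append.comp (hdbl.comp .fst) (.const [true, false]))
      (hrep.comp .snd)
  have h2 : Primrec fun a : Str × ℕ => encPair a.1 a.2 :=
    this.of_eq fun a => by simp [encPair, List.append_assoc]
  exact h2.to₂

/-- The search step: decode `k` as `((x, n), p, steps)`, parse `s` as `1^m 0 t`,
and check whether running code `c` on `t ++ p` for `steps` steps outputs
the sentence `encPair x n` with `n ≥ |t| + 2m`. -/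
def chk (c : Nat.Partrec.Code) (s : Str) (k : ℕ) : Option Str :=
  (Encodable.decode (α := (Str × ℕ) × Str × ℕ) k).bind fun q =>
    if (splitStr s).2.length + 2 * (splitStr s).1 ≤ q.1.2 ∧
        Nat.Partrec.Code.evaln q.2.2 c (Encodable.encode ((splitStr s).2 ++ q.2.1)) =
          some (Encodable.encode (encPair q.1.1 q.1.2))
    then some q.1.1 else none

lemma chk_primrec (c : Nat.Partrec.Code) : Primrec₂ (chk c) := by
  have hdec : Primrec fun a : Str × ℕ =>
      Encodable.decode (α := (Str × ℕ) × Str × ℕ) a.2 :=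
    Primrec.decode.comp .snd
  have hsplit : Primrec fun z : (Str × ℕ) × ((Str × ℕ) × Str × ℕ) => splitStr z.1.1 :=
    splitStr_primrec.comp (Primrec.fst.comp .fst)
  have hq : Primrec fun z : (Str × ℕ) × ((Str × ℕ) × Str × ℕ) => z.2 := Primrec.snd
  have hcond : PrimrecPred fun z : (Str × ℕ) × ((Str × ℕ) × Str × ℕ) =>
      (splitStr z.1.1).2.length + 2 * (splitStr z.1.1).1 ≤ z.2.1.2 ∧
        Nat.Partrec.Code.evaln z.2.2.2 c
            (Encodable.encode ((splitStr z.1.1).2 ++ z.2.2.1)) =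
          some (Encodable.encode (encPair z.2.1.1 z.2.1.2)) := by
    refine PrimrecPred.and ?_ ?_
    · exact Primrec.nat_le.comp
        (Primrec.nat_add.comp (Primrec.list_length.comp (Primrec.snd.comp hsplit))
          (Primrec.nat_mul.comp (.const 2) (Primrec.fst.comp hsplit)))
        (Primrec.snd.comp (Primrec.fst.comp hq))
    · refine Primrec.eq.comp ?_ ?_
      · exact Nat.Partrec.Code.primrec_evaln.comp
          (Primrec.pair
            (Primrec.pair (Primrec.snd.comp (Primrec.snd.comp hq)) (.const c))
            (Primrec.encode.comp (Primrec.list_append.comp (Primrec.snd.comp hsplit)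
              (Primrec.fst.comp (Primrec.snd.comp hq)))))
      · exact Primrec.option_some.comp (Primrec.encode.comp
          (encPair_primrec.comp (Primrec.fst.comp (Primrec.fst.comp hq))
            (Primrec.snd.comp (Primrec.fst.comp hq))))
  have hg : Primrec₂ fun (a : Str × ℕ) (q : (Str × ℕ) × Str × ℕ) =>
      if (splitStr a.1).2.length + 2 * (splitStr a.1).1 ≤ q.1.2 ∧
          Nat.Partrec.Code.evaln q.2.2 c (Encodable.encode ((splitStr a.1).2 ++ q.2.1)) =
            some (Encodable.encode (encPair q.1.1 q.1.2))
      then some q.1.1 else none :=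
    (Primrec.ite hcond
      (Primrec.option_some.comp (Primrec.fst.comp (Primrec.fst.comp hq)))
      (.const none)).to₂
  exact (Primrec.option_bind hdec hg).to₂

/-- Chaitin's incompleteness theorem: there is a constant `c` such that a sound theory,
whose theorems are enumerated by a program `t` (so its complexity is at most `|t|`),
cannot prove any statement `K(x) > n` with `n > |t| + c`.  The theory proves `K(x) > n`
iff the encoded sentence `encPair x n` appears among the outputs `U (t ++ p)`. -/
theorem stmt5 (U : Str →. Str) (hU : Univ U) :
    ∃ c : ℕ, ∀ t : Str,
      (∀ (x : Str) (n : ℕ), (∃ p : Str, encPair x n ∈ U (t ++ p)) → n < Kc U x) →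
      ∀ (x : Str) (n : ℕ), (∃ p : Str, encPair x n ∈ U (t ++ p)) → n ≤ t.length + c := by
  obtain ⟨hUp, hUu⟩ := hU
  obtain ⟨cU, hcU⟩ := Nat.Partrec.Code.exists_code.1 hUp
  -- membership transfer between `U` and `eval cU`
  have hmem : ∀ (q y : Str), y ∈ U q ↔
      Encodable.encode y ∈ cU.eval (Encodable.encode q) := by
    intro q y
    rw [hcU]
    simp [Encodable.encodek, Part.mem_map_iff, Encodable.encode_injective.eq_iff]
  -- the searching machine
  set F : Str →. Str := fun s => Nat.rfindOpt (chk cU s) with hFdef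
  have hF : Partrec F := Partrec.rfindOpt (chk_primrec cU).to_comp
  obtain ⟨e, he⟩ := hUu F hF
  refine ⟨2 * e.length + 1, fun t hsound x n ⟨p, hp⟩ => ?_⟩
  by_contra hlt
  push_neg at hlt
  set m := e.length + 1 with hm
  set s := List.replicate m true ++ false :: t with hs
  -- `F s` halts
  have hx : Encodable.encode (encPair x n) ∈ cU.eval (Encodable.encode (t ++ p)) :=
    (hmem _ _).1 hp
  obtain ⟨steps, hsteps⟩ := Nat.Partrec.Code.evaln_complete.1 hx
  have hk : chk cU s (Encodable.encode ((x, n), p, steps)) = some x := by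
    unfold chk
    rw [Encodable.encodek, Option.bind_some, hs, splitStr_eq, if_pos]
    exact ⟨by show t.length + 2 * m ≤ n; omega, Option.mem_def.mp hsteps⟩
  have hdom : (F s).Dom := Nat.rfindOpt_dom.2 ⟨_, _, hk⟩
  have hx'F : (F s).get hdom ∈ F s := Part.get_mem hdom
  set x' := (F s).get hdom with hx'
  obtain ⟨k, hkx⟩ := Nat.rfindOpt_spec hx'F
  -- unpack the successful check
  rw [Option.mem_def] at hkx
  unfold chk at hkx
  rw [hs, splitStr_eq] at hkx
  obtain ⟨q, hqdec, hif⟩ := Option.bind_eq_some_iff.1 hkx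
  obtain ⟨⟨x₁, n₁⟩, p₁, steps₁⟩ := q
  rcases em ((m, t).2.length + 2 * (m, t).1 ≤ n₁ ∧
      Nat.Partrec.Code.evaln steps₁ cU (Encodable.encode ((m, t).2 ++ p₁)) =
        some (Encodable.encode (encPair x₁ n₁))) with hcond | hcond
  swap
  · rw [if_neg hcond] at hif; exact absurd hif (by simp)
  · obtain ⟨hn₁, hev⟩ := hcond
    rw [if_pos ⟨hn₁, hev⟩] at hif
    have hn₁' : t.length + 2 * m ≤ n₁ := hn₁
    have hx₁ : x₁ = x' := by injection hif
    have hU₁ : encPair x₁ n₁ ∈ U (t ++ p₁) := by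
      rw [hmem]
      exact Nat.Partrec.Code.evaln_sound hev
    have h1 : n₁ < Kc U x₁ := hsound x₁ n₁ ⟨p₁, hU₁⟩
    have h2 : x₁ ∈ U (e ++ s) := by
      rw [he s, hx₁]
      exact hx'F
    have h3 : Kc U x₁ ≤ (e ++ s).length := Nat.sInf_le ⟨e ++ s, rfl, h2⟩
    have hlen : (e ++ s).length = e.length + (m + 1 + t.length) := by
      simp [hs, List.length_append, List.length_replicate]
      omega
    omega
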